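/- Let μ* be an upward continuous outer measure on a set X with 0 < μ*(X), and assume 𝔬(X, μ*) = |X| = 𝔡. Then GES(X, μ*) fails. -/

import Mathlib

open MeasureTheory Filter Set

/-- Eventual domination: `α ≤* β` iff `α n ≤ β n` for all but finitely many `n`. -/
def EvDom (α β : ℕ → ℕ) : Prop := ∀ᶠ n in atTop, α n ≤ β n

/-- The dominating number `𝔡`: the least cardinality of a cofinal subset of
`(ℕ → ℕ, ≤*)`. -/
noncomputable def dNum : Cardinal :=
  sInf {c | ∃ S : Set (ℕ → ℕ), (∀ α, ∃ β ∈ S, EvDom α β) ∧ Cardinal.mk S = c}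

/-- `μ` is an upward continuous outer measure. -/
def UpCont {X : Type*} (μ : OuterMeasure X) : Prop :=
  ∀ A : ℕ → Set X,
    Tendsto (fun n => μ (⋃ k < n, A k)) atTop (nhds (μ (⋃ n, A n)))

/-- `GES(X, μ*)`: for every pointwise vanishing sequence `F` of real-valued functions on
`X` and each `M < μ*(X)` there is `A ⊆ X` with `μ*(A) > M` on which `F` converges
uniformly to `0`. -/
def GES {X : Type*} (μ : OuterMeasure X) : Prop :=
  ∀ F : ℕ → X → ℝ, (∀ x, Tendsto (fun n => F n x) atTop (nhds 0)) →
    ∀ M < μ Set.univ, ∃ A : Set X, M < μ A ∧ TendstoUniformlyOn F 0 atTop A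

/-- `𝔬(X, μ*)`: the least cardinality of a subset of `X` of full outer measure. -/
noncomputable def oNum {X : Type*} (μ : OuterMeasure X) : Cardinal :=
  sInf {c | ∃ Y : Set X, μ Y = μ Set.univ ∧ Cardinal.mk Y = c}

/-! ### Auxiliary facts about the dominating number -/

lemma dNum_set_nonempty :
    {c | ∃ S : Set (ℕ → ℕ), (∀ α, ∃ β ∈ S, EvDom α β) ∧ Cardinal.mk S = c}.Nonempty :=
  ⟨_, Set.univ, fun α => ⟨α, trivial, Eventually.of_forall fun _ => le_rfl⟩, rfl⟩

lemma dNum_mem : ∃ S : Set (ℕ → ℕ), (∀ α, ∃ β ∈ S, EvDom α β) ∧ Cardinal.mk S = dNum :=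
  csInf_mem dNum_set_nonempty

/-- A family of cardinality less than `𝔡` is not dominating. -/
lemma not_dom_of_lt {S : Set (ℕ → ℕ)} (h : Cardinal.mk S < dNum) :
    ∃ a : ℕ → ℕ, ∀ β ∈ S, ¬ EvDom a β := by
  by_contra hc
  push_neg at hc
  have : dNum ≤ Cardinal.mk S :=
    csInf_le (OrderBot.bddBelow _) ⟨S, fun α => by
      obtain ⟨β, hβ, hd⟩ := hc α; exact ⟨β, hβ, hd⟩, rfl⟩
  exact absurd h (not_lt.mpr this)

/-- The dominating number is infinite. -/
lemma aleph0_le_dNum : Cardinal.aleph0 ≤ dNum := by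
  refine le_csInf dNum_set_nonempty ?_
  rintro c ⟨S, hS, rfl⟩
  by_contra hlt
  push_neg at hlt
  have hfin : S.Finite := by
    rw [← Set.not_infinite]
    intro hinf
    exact absurd (Cardinal.aleph0_le_mk_iff.mpr hinf.to_subtype) (not_le.mpr hlt)
  set g : ℕ → ℕ := fun n => hfin.toFinset.sup (fun f => f n) + 1 with hg
  obtain ⟨β, hβS, hβ⟩ := hS g
  obtain ⟨n, hn⟩ := hβ.exists
  have h1 : β n ≤ hfin.toFinset.sup (fun f => f n) :=
    Finset.le_sup (f := fun f => f n) (hfin.mem_toFinset.mpr hβS)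
  have h2 : β n < g n := by rw [hg]; exact Nat.lt_succ_of_le h1
  exact absurd hn (not_le.mpr h2)

/-! ### The test sequence of functions -/

/-- The sequence of functions coding an assignment `a : X → (ℕ → ℕ)`:
`FF a ⟨k, j⟩ x = 1/(k+1)` if `j ≤ a x k` and `0` otherwise. -/
noncomputable def FF {X : Type u} (a : X → ℕ → ℕ) : ℕ → X → ℝ := fun n x =>
  if (Nat.unpair n).2 ≤ a x (Nat.unpair n).1 then 1 / ((Nat.unpair n).1 + 1) else 0

lemma FF_cases {X : Type u} (a : X → ℕ → ℕ) (n : ℕ) (x : X) :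
    FF a n x = 1 / ((Nat.unpair n).1 + 1) ∨ FF a n x = 0 := by
  unfold FF; split
  · simp
  · simp

lemma FF_nonneg {X : Type u} (a : X → ℕ → ℕ) (n : ℕ) (x : X) : 0 ≤ FF a n x := by
  rcases FF_cases a n x with h | h <;> rw [h] <;> positivity

/-- `FF a` converges to `0` pointwise. -/
lemma FF_tendsto {X : Type u} (a : X → ℕ → ℕ) (x : X) :
    Tendsto (fun n => FF a n x) atTop (nhds 0) := by
  rw [NormedAddCommGroup.tendsto_nhds_zero]
  intro ε hε
  obtain ⟨K, hK⟩ := exists_nat_one_div_lt hε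
  set Bf : Finset ℕ :=
    (Finset.range K ×ˢ Finset.range ((Finset.range K).sup (a x) + 1)).image
      fun p => Nat.pair p.1 p.2 with hBf
  filter_upwards [eventually_gt_atTop (Bf.sup id)] with n hn
  have hnB : n ∉ Bf := by
    intro h
    have := Finset.le_sup (f := id) h
    simp only [id] at this
    omega
  by_cases hk : (Nat.unpair n).1 < K
  · have hj : ¬ (Nat.unpair n).2 ≤ a x (Nat.unpair n).1 := by
      intro hj
      apply hnB
      rw [hBf]
      refine Finset.mem_image.mpr ⟨((Nat.unpair n).1, (Nat.unpair n).2), ?_, Nat.pair_unpair n⟩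
      refine Finset.mem_product.mpr ⟨Finset.mem_range.mpr hk, Finset.mem_range.mpr ?_⟩
      have : a x (Nat.unpair n).1 ≤ (Finset.range K).sup (a x) :=
        Finset.le_sup (Finset.mem_range.mpr hk)
      omega
    have : FF a n x = 0 := by unfold FF; rw [if_neg hj]
    rw [this]; simpa using hε
  · push_neg at hk
    have h1 : FF a n x ≤ 1 / ((K : ℝ) + 1) := by
      rcases FF_cases a n x with h | h
      · rw [h]
        apply one_div_le_one_div_of_le (by positivity)
        have : (K : ℝ) ≤ ((Nat.unpair n).1 : ℝ) := by exact_mod_cast hk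
        linarith
      · rw [h]; positivity
    rw [Real.norm_eq_abs, abs_of_nonneg (FF_nonneg a n x)]
    exact lt_of_le_of_lt h1 hK

/-- If `FF a` converges uniformly to `0` on `A`, then the family `{a x : x ∈ A}` is
pointwise bounded. -/
lemma FF_uniform {X : Type u} (a : X → ℕ → ℕ) (A : Set X)
    (h : TendstoUniformlyOn (FF a) 0 atTop A) :
    ∃ β : ℕ → ℕ, ∀ x ∈ A, ∀ k, a x k ≤ β k := by
  rw [Metric.tendstoUniformlyOn_iff] at h
  have h' : ∀ k : ℕ, ∃ N : ℕ, ∀ n ≥ N, ∀ x ∈ A, dist 0 (FF a n x) < 1 / ((k : ℝ) + 1) := by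
    intro k
    have := h (1 / ((k : ℝ) + 1)) (by positivity)
    rw [eventually_atTop] at this
    obtain ⟨N, hN⟩ := this
    exact ⟨N, fun n hn x hx => hN n hn x hx⟩
  choose β hβ using h'
  refine ⟨β, fun x hx k => ?_⟩
  by_contra hc
  push_neg at hc
  set n := Nat.pair k (a x k) with hn
  have hge : n ≥ β k := le_trans (le_of_lt hc) (Nat.right_le_pair k (a x k))
  have := hβ k n hge x hx
  have hFF : FF a n x = 1 / ((k : ℝ) + 1) := by
    unfold FF
    rw [hn, Nat.unpair_pair]
    simp
  rw [hFF, dist_comm, dist_zero_right, Real.norm_eq_abs, abs_of_nonneg (by positivity)] at this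
  exact lt_irrefl _ this

/-! ### The combinatorial core -/

/-- If `|X| = 𝔡` (with a universe lift), then there is an assignment `a : X → (ℕ → ℕ)`
such that for every `δ`, the set of `x` with `a x ≤* δ` has cardinality `< |X|`. -/
lemma exists_assignment {X : Type u} (hb : Cardinal.mk X = Cardinal.lift.{u} dNum) :
    ∃ a : X → ℕ → ℕ, ∀ δ : ℕ → ℕ,
      Cardinal.mk {x : X | EvDom (a x) δ} < Cardinal.mk X := by
  obtain ⟨S, hSdom, hScard⟩ := dNum_mem
  have hXS : Cardinal.mk X = Cardinal.mk (ULift.{u} S) := by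
    rw [Cardinal.mk_uLift, hScard]; exact hb
  obtain ⟨e⟩ := Cardinal.eq.mp hXS
  set d : X → ℕ → ℕ := fun x => ((e x).down : ℕ → ℕ) with hd
  have hdsurj : ∀ δ : ℕ → ℕ, ∃ y, EvDom δ (d y) := by
    intro δ
    obtain ⟨β, hβS, hβ⟩ := hSdom δ
    refine ⟨e.symm (ULift.up ⟨β, hβS⟩), ?_⟩
    have : d (e.symm (ULift.up ⟨β, hβS⟩)) = β := by
      rw [hd]; simp
    rw [this]; exact hβ
  have hXinf : Cardinal.aleph0 ≤ Cardinal.mk X := by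
    rw [hb, ← Cardinal.lift_aleph0.{u,0}]
    exact Cardinal.lift_le.mpr aleph0_le_dNum
  obtain ⟨r, wo, hr⟩ := Cardinal.ord_eq X
  have hseg : ∀ x : X, Cardinal.mk {y : X | r y x} < Cardinal.mk X := by
    intro x
    have h1 : Cardinal.mk {y : X | r y x} = (Ordinal.typein r x).card := by
      exact (Ordinal.card_typein x).symm
    rw [h1]
    exact Cardinal.lt_ord.mp (hr ▸ Ordinal.typein_lt_type r x)
  have hseg' : ∀ x : X, Cardinal.mk {y : X | ¬ r x y} < Cardinal.mk X := by
    intro x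
    have hsub : {y : X | ¬ r x y} ⊆ {y : X | r y x} ∪ {x} := by
      intro y hy
      rcases trichotomous_of r x y with h | h | h
      · exact absurd h hy
      · exact Or.inr (by simp [h.symm])
      · exact Or.inl h
    have h1 : Cardinal.mk {y : X | ¬ r x y} ≤ Cardinal.mk {y : X | r y x} + 1 := by
      refine le_trans (Cardinal.mk_le_mk_of_subset hsub) ?_
      refine le_trans (Cardinal.mk_union_le _ _) ?_
      rw [Cardinal.mk_singleton]
    rcases lt_or_ge (Cardinal.mk {y : X | r y x}) Cardinal.aleph0 with h | h
    · exact lt_of_le_of_lt h1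
        (lt_of_lt_of_le (Cardinal.add_lt_aleph0 h Cardinal.one_lt_aleph0) hXinf)
    · rw [Cardinal.add_one_eq h] at h1
      exact lt_of_le_of_lt h1 (hseg x)
  have hchoice : ∀ x : X, ∃ a : ℕ → ℕ, ∀ y, ¬ r x y → ¬ EvDom a (d y) := by
    intro x
    have himg : Cardinal.mk (d '' {y : X | ¬ r x y}) < dNum := by
      have h1 : Cardinal.lift.{u} (Cardinal.mk (d '' {y : X | ¬ r x y}))
          ≤ Cardinal.lift.{0} (Cardinal.mk {y : X | ¬ r x y}) :=
        Cardinal.mk_image_le_lift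
      rw [Cardinal.lift_uzero] at h1
      have h2 : Cardinal.lift.{u} (Cardinal.mk (d '' {y : X | ¬ r x y}))
          < Cardinal.lift.{u} dNum := lt_of_le_of_lt h1 (hb ▸ hseg' x)
      exact Cardinal.lift_lt.mp h2
    obtain ⟨a, ha⟩ := not_dom_of_lt himg
    exact ⟨a, fun y hy => ha (d y) ⟨y, hy, rfl⟩⟩
  choose a ha using hchoice
  refine ⟨a, fun δ => ?_⟩
  obtain ⟨y, hy⟩ := hdsurj δ
  have hsub : {x : X | EvDom (a x) δ} ⊆ {x : X | r x y} := by
    intro x hx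
    by_contra hry
    refine ha x y hry ?_
    exact (hx.and hy).mono fun n ⟨h1, h2⟩ => le_trans h1 h2
  exact lt_of_le_of_lt (Cardinal.mk_le_mk_of_subset hsub) (hseg y)

/-- If `0 < μ*(X)` and `𝔬(X, μ*) = |X| = 𝔡`, then `GES(X, μ*)`
fails. -/
theorem stmt11 {X : Type u} (μ : OuterMeasure X) (hμ : UpCont μ)
    (hpos : 0 < μ Set.univ)
    (ho : oNum μ = Cardinal.mk X)
    (hb : Cardinal.lift.{0} (Cardinal.mk X) = Cardinal.lift.{u} dNum) :
    ¬ GES μ := by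
  intro hges
  rw [Cardinal.lift_uzero] at hb
  obtain ⟨a, hA⟩ := exists_assignment hb
  -- every set of small cardinality has outer measure `< μ univ`
  have hsmall : ∀ δ : ℕ → ℕ, μ {x : X | EvDom (a x) δ} < μ Set.univ := by
    intro δ
    refine lt_of_le_of_ne (μ.mono (Set.subset_univ _)) ?_
    intro hfull
    have h1 : oNum μ ≤ Cardinal.mk {x : X | EvDom (a x) δ} :=
      csInf_le (OrderBot.bddBelow _) ⟨_, hfull, rfl⟩
    rw [ho] at h1
    exact absurd (hA δ) (not_lt.mpr h1)
  -- a strictly increasing sequence converging to `μ univ`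
  obtain ⟨u, hu1, hu2, hu3⟩ := exists_seq_strictMono_tendsto' hpos
  -- apply GES to each `u i`
  have hAi : ∀ i : ℕ, ∃ A : Set X, u i < μ A ∧ TendstoUniformlyOn (FF a) 0 atTop A :=
    fun i => hges (FF a) (FF_tendsto a) (u i) (hu2 i).2
  choose A hA1 hA2 using hAi
  choose β hβ using fun i => FF_uniform a (A i) (hA2 i)
  -- diagonalize the bounds
  set δ : ℕ → ℕ := fun n => (Finset.range (n + 1)).sup fun i => β i n with hδ
  have hAsub : ∀ i, A i ⊆ {x : X | EvDom (a x) δ} := by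
    intro i x hx
    have : ∀ n ≥ i, a x n ≤ δ n := by
      intro n hn
      refine le_trans (hβ i x hx n) ?_
      rw [hδ]
      exact Finset.le_sup (f := fun j => β j n) (Finset.mem_range.mpr (by omega))
    exact eventually_atTop.mpr ⟨i, this⟩
  have hle : μ Set.univ ≤ μ {x : X | EvDom (a x) δ} := by
    refine le_of_tendsto' hu3 fun i => ?_
    exact le_of_lt (lt_of_lt_of_le (hA1 i) (μ.mono (hAsub i)))
  exact absurd hle (not_le.mpr (hsmall δ))
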